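/- Along a solution of the backward equation ∂ℓ(t,·) = K̂ℓ(t,·) with ℓ(t,x) > 0 for all t, x, the relative entropy H(t) := ∑_x q(x) ℓ(t,x) log ℓ(t,x) satisfies the de Bruijn identity ∂H(t) = -E(ℓ_t, log ℓ_t), where E(f,g) = -∑_{x,y} q(y)κ(y,x) f(y)g(x). -/

import Mathlib

theorem relative_entropy_de_bruijn
    {S : Type*} [Fintype S] (κ : S → S → ℝ) (q : S → ℝ) (ℓ : ℝ → S → ℝ)
    (hκ_off : ∀ x y, x ≠ y → 0 ≤ κ x y)
    (hκ_row : ∀ x, ∑ y, κ x y = 0)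
    (hq_pos : ∀ x, 0 < q x)
    (hq_sum : ∑ x, q x = 1)
    (hq_inv : ∀ x, ∑ y, q y * κ y x = 0)
    (hℓ_pos : ∀ t x, 0 < ℓ t x)
    (hℓ : ∀ t x, HasDerivAt (fun s => ℓ s x)
        (∑ y, (q y / q x) * κ y x * ℓ t y) t) :
    ∀ t, HasDerivAt (fun s => ∑ x, q x * ℓ s x * Real.log (ℓ s x))
      (-(-(∑ x, ∑ y, q y * κ y x * ℓ t y * Real.log (ℓ t x)))) t := by
  intro t
  have key : ∀ x, HasDerivAt (fun s => q x * ℓ s x * Real.log (ℓ s x))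
      ((∑ y, q y * κ y x * ℓ t y * Real.log (ℓ t x)) + ∑ y, q y * κ y x * ℓ t y) t := by
    intro x
    have hne : ℓ t x ≠ 0 := (hℓ_pos t x).ne'
    have hd := ((hℓ t x).fun_mul ((hℓ t x).log hne)).const_mul (q x)
    have heq : (fun s => q x * ℓ s x * Real.log (ℓ s x))
        = fun s => q x * (ℓ s x * Real.log (ℓ s x)) := by
      funext s; ring
    rw [heq]
    refine hd.congr_deriv (Eq.symm ?_)
    have hqne : q x ≠ 0 := (hq_pos x).ne'
    have hs : q x * ∑ y, q y / q x * κ y x * ℓ t y = ∑ y, q y * κ y x * ℓ t y := by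
      rw [Finset.mul_sum]
      apply Finset.sum_congr rfl; intro y _
      field_simp
    rw [mul_comm (ℓ t x), div_mul_cancel₀ _ hne, mul_add, ← mul_assoc, hs,
      Finset.sum_mul]
  have hsum : HasDerivAt (fun s => ∑ x, q x * ℓ s x * Real.log (ℓ s x))
      (∑ x, ((∑ y, q y * κ y x * ℓ t y * Real.log (ℓ t x)) + ∑ y, q y * κ y x * ℓ t y)) t :=
    HasDerivAt.fun_sum (fun x _ => key x)
  convert hsum using 1
  rw [Finset.sum_add_distrib]
  have hz : ∑ x, ∑ y, q y * κ y x * ℓ t y = 0 := by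
    rw [Finset.sum_comm]
    have : ∀ y, ∑ x, q y * κ y x * ℓ t y = 0 := by
      intro y
      have : ∑ x, q y * κ y x * ℓ t y = q y * ℓ t y * ∑ x, κ y x := by
        rw [Finset.mul_sum]; apply Finset.sum_congr rfl; intro x _; ring
      rw [this, hκ_row, mul_zero]
    simp [this]
  rw [hz]; ring
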